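/- Let 0 ≤ ℓ ≤ m ≤ n. Then: (a) for every γ = {γ_1 < ⋯ < γ_ℓ} ⊆ {1,…,m}, Σ_{β ⊆ {1,…,n}, |β| = ℓ} c(β,γ) = C(n, m); and (b) for every β = {β_1 < ⋯ < β_ℓ} ⊆ {1,…,n}, Σ_{γ ⊆ {1,…,m}, |γ| = ℓ} c(β,γ) = C(n−ℓ, m−ℓ). -/

import Mathlib

noncomputable section

/-- Extend a (1-indexed) sequence `β_1 < ⋯ < β_ℓ` of positions in `{1,…,n}` by the
conventions `β_0 = 0` and `β_{ℓ+1} = n+1`.  Here `β : Fin ℓ → ℕ` lists `β_1,…,β_ℓ`. -/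
def extSeq (n ℓ : ℕ) (β : Fin ℓ → ℕ) (k : Fin (ℓ + 2)) : ℕ :=
  if h0 : (k : ℕ) = 0 then 0
  else if h1 : (k : ℕ) = ℓ + 1 then n + 1
  else β ⟨(k : ℕ) - 1, by have hk := k.isLt; omega⟩

/-- The combinatorial coefficient
`c(β,γ) = ∏_{k=1}^{ℓ+1} C(β_k - β_{k-1} - 1, γ_k - γ_{k-1} - 1)`,
with `β_0 = γ_0 = 0`, `β_{ℓ+1} = n+1`, `γ_{ℓ+1} = m+1`.  The subsets
`β ⊆ {1,…,n}` and `γ ⊆ {1,…,m}` are encoded by strictly increasing maps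
`Fin ℓ → Fin n` and `Fin ℓ → Fin m` (0-indexed, whence the `+ 1`'s). -/
def gapCoeff (n m ℓ : ℕ) (β : Fin ℓ → Fin n) (γ : Fin ℓ → Fin m) : ℕ :=
  ∏ k : Fin (ℓ + 1),
    Nat.choose
      (extSeq n ℓ (fun i => (β i : ℕ) + 1) k.succ
        - extSeq n ℓ (fun i => (β i : ℕ) + 1) k.castSucc - 1)
      (extSeq m ℓ (fun i => (γ i : ℕ) + 1) k.succ
        - extSeq m ℓ (fun i => (γ i : ℕ) + 1) k.castSucc - 1)

open Finset Finset.Nat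


lemma hockey (N c : ℕ) : ∑ a ∈ range (N+1), a.choose c = (N+1).choose (c+1) := by
  rcases le_or_gt c N with h | h
  · rw [← Nat.sum_Icc_choose N c]
    rw [show range (N+1) = Icc 0 N by rw [range_eq_Ico, Finset.Ico_add_one_right_eq_Icc]]
    symm
    apply sum_subset
    · intro x hx; simp only [mem_Icc] at *; omega
    · intro x hx hx'; simp only [mem_Icc] at *
      exact Nat.choose_eq_zero_of_lt (by omega)
  · rw [Nat.choose_eq_zero_of_lt (by omega)]
    apply sum_eq_zero
    intro x hx; simp only [mem_range] at hx
    exact Nat.choose_eq_zero_of_lt (by omega)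

lemma lemV0 : ∀ N c d : ℕ, ∑ p ∈ antidiagonal N, p.1.choose c * p.2.choose d
    = (N+1).choose (c+d+1) := by
  intro N
  induction N with
  | zero =>
    intro c d
    simp only [antidiagonal_zero, sum_singleton]
    rcases c with _ | c <;> rcases d with _ | d <;> simp [Nat.choose]
  | succ N ih =>
    intro c d
    rw [Finset.Nat.antidiagonal_succ', Finset.sum_cons]
    have key : ∑ p ∈ antidiagonal N,
        ((Function.Embedding.refl ℕ).prodMap ⟨Nat.succ, Nat.succ_injective⟩ p).1.choose c *
        ((Function.Embedding.refl ℕ).prodMap ⟨Nat.succ, Nat.succ_injective⟩ p).2.choose d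
        = ∑ p ∈ antidiagonal N, p.1.choose c * (p.2+1).choose d := by
      apply sum_congr rfl; intro p _; rfl
    rw [Finset.sum_map, key]
    rcases d with _ | d
    · simp only [Nat.choose_zero_right, mul_one]
      rw [Finset.Nat.sum_antidiagonal_eq_sum_range_succ_mk]
      simp only []
      rw [show N + 1 = N.succ from rfl] at *
      rw [hockey N c]
      rw [Nat.add_zero, Nat.choose_succ_succ (N+1) c]
    · have split : ∀ p : ℕ × ℕ, p.1.choose c * (p.2+1).choose (d+1)
          = p.1.choose c * p.2.choose d + p.1.choose c * p.2.choose (d+1) := by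
        intro p
        rw [Nat.choose_succ_succ, Nat.mul_add]
      simp only [split, Finset.sum_add_distrib, ih]
      rw [Nat.choose_eq_zero_of_lt (Nat.succ_pos d), Nat.mul_zero, Nat.zero_add]
      rw [show c + (d+1) + 1 = (c + d + 1) + 1 by ring, Nat.choose_succ_succ (N+1)]

lemma lemV (e : ℕ) : ∀ c d N : ℕ, e ≤ d →
    ∑ p ∈ antidiagonal N, p.1.choose c * (p.2 + e).choose d = (N+e+1).choose (c+d+1) := by
  induction e with
  | zero => intro c d N _; simpa using lemV0 N c d
  | succ e ih =>
    intro c d N hed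
    obtain ⟨d, rfl⟩ : ∃ d', d = d' + 1 := ⟨d - 1, by omega⟩
    have split : ∀ p : ℕ × ℕ, p.1.choose c * (p.2 + (e+1)).choose (d+1)
        = p.1.choose c * (p.2+e).choose d + p.1.choose c * (p.2+e).choose (d+1) := by
      intro p
      rw [show p.2 + (e+1) = (p.2 + e) + 1 by ring, Nat.choose_succ_succ, Nat.mul_add]
    rw [Finset.sum_congr rfl fun p _ => split p, Finset.sum_add_distrib,
      ih c d N (by omega), ih c (d+1) N (by omega)]
    rw [show c + (d+1) + 1 = (c + d + 1) + 1 by ring,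
      show N + (e+1) + 1 = (N + e + 1) + 1 by ring, Nat.choose_succ_succ (N+e+1)]


lemma sum_adT_succ {M : Type*} [AddCommMonoid M] (k n : ℕ) (f : (Fin (k+1) → ℕ) → M) :
    ∑ x ∈ antidiagonalTuple (k+1) n, f x
      = ∑ p ∈ antidiagonal n, ∑ x ∈ antidiagonalTuple k p.2, f (Fin.cons p.1 x) := by
  rw [Finset.sum_sigma']
  symm
  refine Finset.sum_bij'
    (i := fun (q : (_ : ℕ × ℕ) × (Fin k → ℕ)) (_ : q ∈ (antidiagonal n).sigma
        fun p => antidiagonalTuple k p.2) => Fin.cons q.1.1 q.2)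
    (j := fun (x : Fin (k+1) → ℕ) (_ : x ∈ antidiagonalTuple (k+1) n) =>
      ⟨(x 0, ∑ i : Fin k, x i.succ), Fin.tail x⟩) ?_ ?_ ?_ ?_ ?_
  · intro q hq
    simp only [mem_sigma, HasAntidiagonal.mem_antidiagonal, mem_antidiagonalTuple] at hq ⊢
    rw [Fin.sum_cons, hq.2, hq.1]
  · intro x hx
    simp only [mem_antidiagonalTuple] at hx
    simp only [mem_sigma, HasAntidiagonal.mem_antidiagonal, mem_antidiagonalTuple]
    exact ⟨by rw [← hx, Fin.sum_univ_succ], rfl⟩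
  · intro q hq
    simp only [mem_sigma, HasAntidiagonal.mem_antidiagonal, mem_antidiagonalTuple] at hq
    obtain ⟨⟨a, b⟩, y⟩ := q
    simp only at hq
    simp [Fin.cons_zero, Fin.cons_succ, Fin.tail_cons, hq.2]
  · intro x hx
    simp [Fin.cons_self_tail]
  · intro q hq
    rfl

lemma lemA : ∀ r : ℕ, ∀ N : ℕ, ∀ h : Fin (r+1) → ℕ,
    ∑ g ∈ antidiagonalTuple (r+1) N, ∏ k, (g k).choose (h k)
      = (N + r).choose ((∑ k, h k) + r) := by
  intro r
  induction r with
  | zero =>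
    intro N h
    simp [Fin.prod_univ_one, Fin.sum_univ_one]
  | succ r ih =>
    intro N h
    rw [sum_adT_succ]
    have inner : ∀ p ∈ antidiagonal N, ∑ x ∈ antidiagonalTuple (r+1) p.2,
        ∏ k, ((Fin.cons p.1 x : Fin (r+1+1) → ℕ) k).choose (h k)
        = p.1.choose (h 0) * (p.2 + r).choose ((∑ k, Fin.tail h k) + r) := by
      intro p _
      rw [← ih p.2 (Fin.tail h), Finset.mul_sum]
      apply sum_congr rfl
      intro x _
      rw [Fin.prod_univ_succ]
      simp [Fin.tail]
    rw [Finset.sum_congr rfl inner, lemV r (h 0) ((∑ k, Fin.tail h k) + r) N (by omega)]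
    have htail : (∑ k : Fin (r+1), Fin.tail h k) = ∑ k : Fin (r+1), h k.succ := rfl
    rw [Fin.sum_univ_succ (f := h), htail]
    congr 1
    all_goals omega

lemma lemB : ∀ r : ℕ, ∀ M : ℕ, ∀ g : Fin r → ℕ,
    ∑ h ∈ antidiagonalTuple r M, ∏ k, (g k).choose (h k) = (∑ k, g k).choose M := by
  intro r
  induction r with
  | zero =>
    intro M g
    rcases M with _ | M
    · simp
    · simp
  | succ r ih =>
    intro M g
    rw [sum_adT_succ]
    have inner : ∀ p ∈ antidiagonal M, ∑ x ∈ antidiagonalTuple r p.2,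
        ∏ k, (g k).choose ((Fin.cons p.1 x : Fin (r+1) → ℕ) k)
        = (g 0).choose p.1 * (∑ k : Fin r, Fin.tail g k).choose p.2 := by
      intro p _
      rw [← ih p.2, Finset.mul_sum]
      apply sum_congr rfl
      intro x _
      rw [Fin.prod_univ_succ]
      simp [Fin.tail]
    rw [Finset.sum_congr rfl inner, ← Nat.add_choose_eq]
    have htail : (∑ k : Fin r, Fin.tail g k) = ∑ k : Fin r, g k.succ := rfl
    rw [Fin.sum_univ_succ (f := g), htail]


/-- ℕ-indexed version of the extended sequence. -/
def Efun (n ℓ : ℕ) (β : Fin ℓ → Fin n) (j : ℕ) : ℕ :=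
  if h0 : j = 0 then 0 else if h : j ≤ ℓ then (β ⟨j-1, by omega⟩ : ℕ) + 1 else n + 1

lemma Efun_zero (n ℓ : ℕ) (β : Fin ℓ → Fin n) : Efun n ℓ β 0 = 0 := rfl

lemma Efun_mid (n ℓ : ℕ) (β : Fin ℓ → Fin n) (j : ℕ) (h1 : 1 ≤ j) (h2 : j ≤ ℓ) :
    Efun n ℓ β j = (β ⟨j-1, by omega⟩ : ℕ) + 1 := by
  unfold Efun
  rw [dif_neg (by omega), dif_pos h2]

lemma Efun_last (n ℓ : ℕ) (β : Fin ℓ → Fin n) (j : ℕ) (h : j = ℓ + 1) :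
    Efun n ℓ β j = n + 1 := by
  unfold Efun
  rw [dif_neg (by omega), dif_neg (by omega)]

lemma Efun_eq_extSeq (n ℓ : ℕ) (β : Fin ℓ → Fin n) (k : Fin (ℓ+2)) :
    extSeq n ℓ (fun i => (β i : ℕ) + 1) k = Efun n ℓ β (k : ℕ) := by
  have hk := k.isLt
  unfold extSeq Efun
  split_ifs with h1 h2 h3 <;> first | rfl | omega

/-- The gap sequence of `β`. -/
def gaps (n ℓ : ℕ) (β : Fin ℓ → Fin n) (k : Fin (ℓ+1)) : ℕ :=
  Efun n ℓ β ((k : ℕ) + 1) - Efun n ℓ β (k : ℕ) - 1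

lemma gapCoeff_eq (n m ℓ : ℕ) (β : Fin ℓ → Fin n) (γ : Fin ℓ → Fin m) :
    gapCoeff n m ℓ β γ = ∏ k : Fin (ℓ+1), (gaps n ℓ β k).choose (gaps m ℓ γ k) := by
  unfold gapCoeff gaps
  apply Finset.prod_congr rfl
  intro k _
  rw [Efun_eq_extSeq, Efun_eq_extSeq, Efun_eq_extSeq, Efun_eq_extSeq,
    Fin.val_succ, Fin.coe_castSucc]

/-- ℕ-indexed gap sequence. -/
def gapsN (n ℓ : ℕ) (β : Fin ℓ → Fin n) (i : ℕ) : ℕ :=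
  Efun n ℓ β (i + 1) - Efun n ℓ β i - 1

lemma Efun_strict (n ℓ : ℕ) (hln : ℓ ≤ n) (β : Fin ℓ → Fin n)
    (hβ : ∀ i j : Fin ℓ, i < j → β i < β j) :
    ∀ j : ℕ, j ≤ ℓ → Efun n ℓ β j < Efun n ℓ β (j + 1) := by
  intro j hj
  rcases Nat.eq_zero_or_pos j with rfl | hjpos
  · rw [Efun_zero]
    rcases Nat.eq_zero_or_pos ℓ with rfl | hl
    · rw [Efun_last n 0 β 1 rfl]; omega
    · rw [Efun_mid n ℓ β 1 le_rfl hl]; omega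
  · rcases eq_or_lt_of_le hj with rfl | hjl
    · rw [Efun_mid n j β j hjpos le_rfl, Efun_last n j β (j+1) rfl]
      have := (β ⟨j-1, by omega⟩).isLt
      omega
    · rw [Efun_mid n ℓ β j hjpos (by omega), Efun_mid n ℓ β (j+1) (by omega) (by omega)]
      have key := hβ ⟨j-1, by omega⟩ ⟨j+1-1, by omega⟩ (by
        rw [Fin.lt_def]; simp only []; omega)
      rw [Fin.lt_def] at key
      omega

lemma Efun_partial (n ℓ : ℕ) (hln : ℓ ≤ n) (β : Fin ℓ → Fin n)
    (hβ : ∀ i j : Fin ℓ, i < j → β i < β j) :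
    ∀ j : ℕ, j ≤ ℓ + 1 → Efun n ℓ β j = j + ∑ i ∈ range j, gapsN n ℓ β i := by
  intro j
  induction j with
  | zero => intro _; simp [Efun]
  | succ j ih =>
    intro hj
    have hstep := Efun_strict n ℓ hln β hβ j (by omega)
    have hih := ih (by omega)
    rw [Finset.sum_range_succ]
    unfold gapsN at hih ⊢
    omega

lemma sum_gaps (n ℓ : ℕ) (hln : ℓ ≤ n) (β : Fin ℓ → Fin n)
    (hβ : ∀ i j : Fin ℓ, i < j → β i < β j) :
    ∑ k : Fin (ℓ+1), gaps n ℓ β k = n - ℓ := by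
  have h1 : ∑ k : Fin (ℓ+1), gaps n ℓ β k = ∑ i ∈ range (ℓ+1), gapsN n ℓ β i := by
    rw [← Fin.sum_univ_eq_sum_range (fun i => gapsN n ℓ β i) (ℓ+1)]
    rfl
  have h2 := Efun_partial n ℓ hln β hβ (ℓ+1) le_rfl
  have h3 : Efun n ℓ β (ℓ+1) = n + 1 := Efun_last n ℓ β (ℓ+1) rfl
  omega

lemma beta_val (n ℓ : ℕ) (hln : ℓ ≤ n) (β : Fin ℓ → Fin n)
    (hβ : ∀ i j : Fin ℓ, i < j → β i < β j) (j : Fin ℓ) :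
    (β j : ℕ) = (j : ℕ) + ∑ i ∈ range ((j : ℕ) + 1), gapsN n ℓ β i := by
  have hj := j.isLt
  have h1 := Efun_partial n ℓ hln β hβ ((j : ℕ) + 1) (by omega)
  have h2 : Efun n ℓ β ((j : ℕ) + 1) = (β j : ℕ) + 1 := by
    rw [Efun_mid n ℓ β ((j : ℕ) + 1) (by omega) (by omega)]
    congr 1
  omega

/-- ℕ-extension of a tuple `g : Fin (ℓ+1) → ℕ`. -/
def Gext (ℓ : ℕ) (g : Fin (ℓ+1) → ℕ) (i : ℕ) : ℕ :=
  if h : i < ℓ + 1 then g ⟨i, h⟩ else 0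

lemma Gext_sum (ℓ : ℕ) (g : Fin (ℓ+1) → ℕ) :
    ∑ i ∈ range (ℓ+1), Gext ℓ g i = ∑ k : Fin (ℓ+1), g k := by
  rw [← Fin.sum_univ_eq_sum_range (fun i => Gext ℓ g i) (ℓ+1)]
  apply Finset.sum_congr rfl
  intro k _
  simp [Gext, k.isLt]

lemma gapsN_eq_Gext_gaps (n ℓ : ℕ) (β : Fin ℓ → Fin n) (i : ℕ) (hi : i < ℓ + 1) :
    gapsN n ℓ β i = Gext ℓ (gaps n ℓ β) i := by
  simp [Gext, hi, gaps, gapsN]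

/-- Inverse map: from a gap tuple to a strictly increasing tuple. -/
def fromG (n ℓ : ℕ) (hln : ℓ ≤ n) (g : Fin (ℓ+1) → ℕ) (hg : ∑ k : Fin (ℓ+1), g k = n - ℓ) :
    Fin ℓ → Fin n :=
  fun j => ⟨(j : ℕ) + ∑ i ∈ range ((j : ℕ) + 1), Gext ℓ g i, by
    have hj := j.isLt
    have h1 : ∑ i ∈ range ((j : ℕ) + 1), Gext ℓ g i ≤ ∑ i ∈ range (ℓ+1), Gext ℓ g i :=
      Finset.sum_le_sum_of_subset (by apply Finset.range_subset_range.mpr; omega)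
    rw [Gext_sum, hg] at h1
    omega⟩

lemma fromG_strict (n ℓ : ℕ) (hln : ℓ ≤ n) (g : Fin (ℓ+1) → ℕ)
    (hg : ∑ k : Fin (ℓ+1), g k = n - ℓ) :
    ∀ i j : Fin ℓ, i < j → fromG n ℓ hln g hg i < fromG n ℓ hln g hg j := by
  intro i j hij
  rw [Fin.lt_def] at hij ⊢
  simp only [fromG]
  have h1 : ∑ a ∈ range ((i : ℕ) + 1), Gext ℓ g a ≤ ∑ a ∈ range ((j : ℕ) + 1), Gext ℓ g a :=
    Finset.sum_le_sum_of_subset (by apply Finset.range_subset_range.mpr; omega)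
  omega

lemma Efun_fromG (n ℓ : ℕ) (hln : ℓ ≤ n) (g : Fin (ℓ+1) → ℕ)
    (hg : ∑ k : Fin (ℓ+1), g k = n - ℓ) :
    ∀ j : ℕ, j ≤ ℓ + 1 → Efun n ℓ (fromG n ℓ hln g hg) j = j + ∑ i ∈ range j, Gext ℓ g i := by
  intro j hj
  rcases Nat.eq_zero_or_pos j with rfl | hjpos
  · simp [Efun_zero]
  · rcases eq_or_lt_of_le hj with rfl | hjl
    · rw [Efun_last n ℓ _ (ℓ+1) rfl, Gext_sum, hg]
      omega
    · rw [Efun_mid n ℓ _ j hjpos (by omega)]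
      simp only [fromG]
      have : j - 1 + 1 = j := by omega
      rw [this]
      omega

lemma gaps_fromG (n ℓ : ℕ) (hln : ℓ ≤ n) (g : Fin (ℓ+1) → ℕ)
    (hg : ∑ k : Fin (ℓ+1), g k = n - ℓ) :
    gaps n ℓ (fromG n ℓ hln g hg) = g := by
  funext k
  have hk := k.isLt
  unfold gaps
  rw [Efun_fromG n ℓ hln g hg (k : ℕ) (by omega),
    Efun_fromG n ℓ hln g hg ((k : ℕ) + 1) (by omega),
    Finset.sum_range_succ]
  have h : Gext ℓ g (k : ℕ) = g k := by simp [Gext, hk]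
  omega

lemma fromG_gaps (n ℓ : ℕ) (hln : ℓ ≤ n) (β : Fin ℓ → Fin n)
    (hβ : ∀ i j : Fin ℓ, i < j → β i < β j)
    (hg : ∑ k : Fin (ℓ+1), gaps n ℓ β k = n - ℓ) :
    fromG n ℓ hln (gaps n ℓ β) hg = β := by
  funext j
  apply Fin.ext
  simp only [fromG]
  rw [beta_val n ℓ hln β hβ j]
  congr 1
  apply Finset.sum_congr rfl
  intro i hi
  simp only [mem_range] at hi
  have hj := j.isLt
  exact (gapsN_eq_Gext_gaps n ℓ β i (by omega)).symm

/-- eqs. (3.25) and (3.26): for `0 ≤ ℓ ≤ m ≤ n`,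
(a) for every `ℓ`-subset `γ` of `{1,…,m}`, `Σ_β c(β,γ) = C(n,m)`, and
(b) for every `ℓ`-subset `β` of `{1,…,n}`, `Σ_γ c(β,γ) = C(n-ℓ, m-ℓ)`. -/
theorem gapCoeff_sums (n m ℓ : ℕ) (hlm : ℓ ≤ m) (hmn : m ≤ n) :
    (∀ γ : Fin ℓ → Fin m, (∀ i j : Fin ℓ, i < j → γ i < γ j) →
      ∑ β ∈ Finset.univ.filter
          (fun β : Fin ℓ → Fin n => ∀ i j : Fin ℓ, i < j → β i < β j),
        gapCoeff n m ℓ β γ = n.choose m)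
    ∧ (∀ β : Fin ℓ → Fin n, (∀ i j : Fin ℓ, i < j → β i < β j) →
      ∑ γ ∈ Finset.univ.filter
          (fun γ : Fin ℓ → Fin m => ∀ i j : Fin ℓ, i < j → γ i < γ j),
        gapCoeff n m ℓ β γ = (n - ℓ).choose (m - ℓ)) := by
  have hln : ℓ ≤ n := hlm.trans hmn
  constructor
  · intro γ hγ
    have hγsum := sum_gaps m ℓ hlm γ hγ
    have key : ∑ β ∈ Finset.univ.filter
          (fun β : Fin ℓ → Fin n => ∀ i j : Fin ℓ, i < j → β i < β j),
        gapCoeff n m ℓ β γ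
        = ∑ g ∈ antidiagonalTuple (ℓ+1) (n-ℓ),
            ∏ k : Fin (ℓ+1), (g k).choose (gaps m ℓ γ k) := by
      refine Finset.sum_bij' (i := fun β _ => gaps n ℓ β)
        (j := fun g hg => fromG n ℓ hln g (mem_antidiagonalTuple.mp hg)) ?_ ?_ ?_ ?_ ?_
      · intro β hβ
        rw [mem_antidiagonalTuple]
        exact sum_gaps n ℓ hln β (Finset.mem_filter.mp hβ).2
      · intro g hg
        simp only [Finset.mem_filter, Finset.mem_univ, true_and]
        exact fromG_strict n ℓ hln g (mem_antidiagonalTuple.mp hg)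
      · intro β hβ
        exact fromG_gaps n ℓ hln β (Finset.mem_filter.mp hβ).2 (sum_gaps n ℓ hln β (Finset.mem_filter.mp hβ).2)
      · intro g hg
        exact gaps_fromG n ℓ hln g (mem_antidiagonalTuple.mp hg)
      · intro β hβ
        exact gapCoeff_eq n m ℓ β γ
    have e1 : n - ℓ + ℓ = n := Nat.sub_add_cancel hln
    have e2 : m - ℓ + ℓ = m := Nat.sub_add_cancel hlm
    rw [key, lemA ℓ (n-ℓ) (gaps m ℓ γ), hγsum, e1, e2]
  · intro β hβ
    have hβsum := sum_gaps n ℓ hln β hβ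
    have key : ∑ γ ∈ Finset.univ.filter
          (fun γ : Fin ℓ → Fin m => ∀ i j : Fin ℓ, i < j → γ i < γ j),
        gapCoeff n m ℓ β γ
        = ∑ h ∈ antidiagonalTuple (ℓ+1) (m-ℓ),
            ∏ k : Fin (ℓ+1), (gaps n ℓ β k).choose (h k) := by
      refine Finset.sum_bij' (i := fun γ _ => gaps m ℓ γ)
        (j := fun h hh => fromG m ℓ hlm h (mem_antidiagonalTuple.mp hh)) ?_ ?_ ?_ ?_ ?_
      · intro γ hγ
        rw [mem_antidiagonalTuple]
        exact sum_gaps m ℓ hlm γ (Finset.mem_filter.mp hγ).2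
      · intro h hh
        simp only [Finset.mem_filter, Finset.mem_univ, true_and]
        exact fromG_strict m ℓ hlm h (mem_antidiagonalTuple.mp hh)
      · intro γ hγ
        exact fromG_gaps m ℓ hlm γ (Finset.mem_filter.mp hγ).2 (sum_gaps m ℓ hlm γ (Finset.mem_filter.mp hγ).2)
      · intro h hh
        exact gaps_fromG m ℓ hlm h (mem_antidiagonalTuple.mp hh)
      · intro γ hγ
        exact gapCoeff_eq n m ℓ β γ
    rw [key, lemB (ℓ+1) (m-ℓ) (gaps n ℓ β), hβsum]
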